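/- arXiv:1307.5708 — 7 statements merged into one kernel-verified Lean document; each statement's English description precedes it below -/
import Mathlib

section
/- Translated polynomial kernels are strictly localized: let p_K ∈ ℝ^N be the signal whose graph Fourier transform is p̂_K(ℓ) = Σ_{k=0}^{K} a_k λ_ℓ^k for some real coefficients a_0,...,a_K. If the shortest-path distance d_G(i,n) between vertices i and n in the graph G (with an edge between distinct vertices m and n if and only if L_{mn} ≠ 0) satisfies d_G(i,n) > K, then (T_i p_K)(n) = 0. -/
open Finset

/-- Graph Fourier transform: f̂(ℓ) = Σₙ f(n) χ_ℓ(n). -/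
noncomputable def gft {N : ℕ} (χ : Fin N → Fin N → ℝ) (f : Fin N → ℝ) (l : Fin N) : ℝ :=
  ∑ n, f n * χ l n

/-- Generalized convolution: (f∗g)(n) = Σ_ℓ f̂(ℓ) ĝ(ℓ) χ_ℓ(n). -/
noncomputable def gconv {N : ℕ} (χ : Fin N → Fin N → ℝ) (f g : Fin N → ℝ) : Fin N → ℝ :=
  fun n => ∑ l, gft χ f l * gft χ g l * χ l n

/-- Generalized translation: (T_i f)(n) = √N Σ_ℓ f̂(ℓ) χ_ℓ(i) χ_ℓ(n). -/
noncomputable def gtrans {N : ℕ} (χ : Fin N → Fin N → ℝ) (i : Fin N) (f : Fin N → ℝ) : Fin N → ℝ :=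
  fun n => Real.sqrt N * ∑ l, gft χ f l * χ l i * χ l n

/-- Generalized modulation: (M_k f)(n) = √N f(n) χ_k(n). -/
noncomputable def gmod {N : ℕ} (χ : Fin N → Fin N → ℝ) (k : Fin N) (f : Fin N → ℝ) : Fin N → ℝ :=
  fun n => Real.sqrt N * f n * χ k n

/-- The simple graph associated to the matrix L: edge between distinct m, n iff L m n ≠ 0. -/
def graphOf {N : ℕ} (L : Matrix (Fin N) (Fin N) ℝ) : SimpleGraph (Fin N) :=
  SimpleGraph.fromRel fun m n => L m n ≠ 0

/-- The signal on the graph whose graph Fourier coefficients are ĝ(λ_ℓ). -/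
noncomputable def kernelSig {N : ℕ} (χ : Fin N → Fin N → ℝ) (lam : Fin N → ℝ)
    (ghat : ℝ → ℝ) : Fin N → ℝ :=
  fun m => ∑ l, ghat (lam l) * χ l m

/-- Windowed graph Fourier atom g_{i,k} = M_k T_i g. -/
noncomputable def wgfAtom {N : ℕ} (χ : Fin N → Fin N → ℝ) (g : Fin N → ℝ)
    (i k : Fin N) : Fin N → ℝ :=
  gmod χ k (gtrans χ i g)


open Matrix

lemma pow_entry_walk {N : ℕ} (L : Matrix (Fin N) (Fin N) ℝ) :
    ∀ (k : ℕ) (i n : Fin N), (L ^ k) i n ≠ 0 →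
      ∃ w : (graphOf L).Walk i n, w.length ≤ k := by
  intro k
  induction k with
  | zero =>
    intro i n h
    have : i = n := by
      by_contra hne
      simp [Matrix.one_apply, hne] at h
    subst this
    exact ⟨SimpleGraph.Walk.nil, le_refl 0⟩
  | succ k ih =>
    intro i n h
    rw [pow_succ, Matrix.mul_apply] at h
    obtain ⟨m, -, hm⟩ := Finset.exists_ne_zero_of_sum_ne_zero h
    have h1 : (L ^ k) i m ≠ 0 := fun h0 => hm (by simp [h0])
    have h2 : L m n ≠ 0 := fun h0 => hm (by simp [h0])
    obtain ⟨w, hw⟩ := ih i m h1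
    by_cases hmn : m = n
    · subst hmn
      exact ⟨w, hw.trans (Nat.le_succ k)⟩
    · have hadj : (graphOf L).Adj m n := ⟨hmn, Or.inl h2⟩
      exact ⟨w.concat hadj, by
        rw [SimpleGraph.Walk.length_concat]; omega⟩

/-- Translated polynomial kernels are strictly localized: if the
shortest-path distance between i and n exceeds K (i.e. every walk from i to n has
length > K), then (T_i p_K)(n) = 0, where p̂_K(ℓ) = Σ_{k=0}^{K} a_k λ_ℓ^k. -/
theorem translated_polynomial_kernel_localized
    (N : ℕ) (hN : 0 < N) (L : Matrix (Fin N) (Fin N) ℝ) (hL : L.IsSymm)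
    (χ : Fin N → Fin N → ℝ) (lam : Fin N → ℝ)
    (horth : ∀ l l' : Fin N, ∑ n, χ l n * χ l' n = if l = l' then (1 : ℝ) else 0)
    (heig : ∀ l : Fin N, L.mulVec (χ l) = lam l • χ l)
    (K : ℕ) (a : ℕ → ℝ) (i n : Fin N)
    (hdist : ∀ w : (graphOf L).Walk i n, K < w.length) :
    gtrans χ i (fun m => ∑ l, (∑ k ∈ Finset.range (K + 1), a k * lam l ^ k) * χ l m) n
      = 0 := by
  classical
  set U : Matrix (Fin N) (Fin N) ℝ := Matrix.of χ with hU
  have hUUt : U * Uᵀ = 1 := by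
    ext l l'
    simp [Matrix.mul_apply, Matrix.one_apply, hU, horth l l']
  have hUtU : Uᵀ * U = 1 := mul_eq_one_comm.mp hUUt
  have hLU : L * Uᵀ = Uᵀ * Matrix.diagonal lam := by
    ext m l
    have := congrFun (heig l) m
    simp only [Matrix.mulVec, dotProduct, Pi.smul_apply, smul_eq_mul] at this
    simp [Matrix.mul_apply, Matrix.diagonal, hU, this, mul_comm]
  have hLdecomp : L = Uᵀ * Matrix.diagonal lam * U := by
    calc L = L * (Uᵀ * U) := by rw [hUtU, Matrix.mul_one]
    _ = (L * Uᵀ) * U := by rw [Matrix.mul_assoc]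
    _ = Uᵀ * Matrix.diagonal lam * U := by rw [hLU]
  have hpow : ∀ k : ℕ, L ^ k = Uᵀ * Matrix.diagonal (fun l => lam l ^ k) * U := by
    intro k
    induction k with
    | zero => simp [hUtU]
    | succ k ih =>
      have hc : ∀ X : Matrix (Fin N) (Fin N) ℝ, U * (Uᵀ * X) = X := fun X => by
        rw [← Matrix.mul_assoc, hUUt, Matrix.one_mul]
      rw [pow_succ, ih, hLdecomp]
      simp only [Matrix.mul_assoc, hc]
      rw [← Matrix.mul_assoc (Matrix.diagonal fun l => lam l ^ k),
        Matrix.diagonal_mul_diagonal]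
      have hd : (fun l => lam l ^ k * lam l) = fun l => lam l ^ (k + 1) := by
        funext l; ring
      rw [hd]
  have hentry : ∀ k : ℕ, ∑ l, lam l ^ k * (χ l i * χ l n) = (L ^ k) i n := by
    intro k
    rw [hpow k]
    simp [Matrix.mul_apply, Matrix.diagonal_apply, hU, mul_ite, Finset.sum_ite_eq']
    refine Finset.sum_congr rfl fun l _ => by ring
  have hzero : ∀ k ∈ Finset.range (K + 1), (L ^ k) i n = 0 := by
    intro k hk
    by_contra h
    obtain ⟨w, hw⟩ := pow_entry_walk L k i n h
    have := hdist w
    simp only [Finset.mem_range] at hk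
    omega
  have hgft : ∀ l : Fin N,
      gft χ (fun m => ∑ l', (∑ k ∈ Finset.range (K + 1), a k * lam l' ^ k) * χ l' m) l
        = ∑ k ∈ Finset.range (K + 1), a k * lam l ^ k := by
    intro l
    unfold gft
    show ∑ m, (∑ l', (∑ k ∈ Finset.range (K + 1), a k * lam l' ^ k) * χ l' m) * χ l m
      = ∑ k ∈ Finset.range (K + 1), a k * lam l ^ k
    calc ∑ m, (∑ l', (∑ k ∈ Finset.range (K + 1), a k * lam l' ^ k) * χ l' m) * χ l m
        = ∑ m, ∑ l', (∑ k ∈ Finset.range (K + 1), a k * lam l' ^ k) * (χ l' m * χ l m) := by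
          refine Finset.sum_congr rfl fun m _ => ?_
          rw [Finset.sum_mul]
          exact Finset.sum_congr rfl fun l' _ => by ring
    _ = ∑ l', (∑ k ∈ Finset.range (K + 1), a k * lam l' ^ k) * ∑ m, χ l' m * χ l m := by
          rw [Finset.sum_comm]
          exact Finset.sum_congr rfl fun l' _ => (Finset.mul_sum _ _ _).symm
    _ = ∑ k ∈ Finset.range (K + 1), a k * lam l ^ k := by
          simp [horth, Finset.sum_ite_eq]
  unfold gtrans
  rw [mul_eq_zero]
  right
  calc ∑ l, gft χ (fun m => ∑ l', (∑ k ∈ Finset.range (K + 1), a k * lam l' ^ k) * χ l' m) l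
        * χ l i * χ l n
      = ∑ l, ∑ k ∈ Finset.range (K + 1), a k * (lam l ^ k * (χ l i * χ l n)) := by
        refine Finset.sum_congr rfl fun l _ => ?_
        rw [hgft l, Finset.sum_mul, Finset.sum_mul]
        exact Finset.sum_congr rfl fun k _ => by ring
  _ = ∑ k ∈ Finset.range (K + 1), a k * ∑ l, lam l ^ k * (χ l i * χ l n) := by
        rw [Finset.sum_comm]
        exact Finset.sum_congr rfl fun k _ => by rw [Finset.mul_sum]
  _ = 0 := by
        refine Finset.sum_eq_zero fun k hk => ?_
        rw [hentry k, hzero k hk, mul_zero]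
end

section
/- Localization of translated kernels via polynomial approximation: let ĝ : [0, λ_max] → ℝ be a kernel, let g ∈ ℝ^N be the signal with graph Fourier coefficients ĝ(λ_ℓ), fix vertices i and n with d_in := d_G(i,n) ≥ 1, and set K := d_in − 1. Then for every real polynomial p of degree at most K, |(T_i g)(n)| ≤ √N · sup_{λ ∈ [0, λ_max]} |ĝ(λ) − p(λ)|. -/
open Finset

/-- Localization of translated kernels via polynomial approximation:
with K = d_G(i,n) − 1 ≥ 0, for every polynomial p of degree at most K and every
uniform bound C on |ĝ − p| over [0, λ_max], one has |(T_i g)(n)| ≤ √N · C. -/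
theorem translated_kernel_localization
    (N : ℕ) (hN : 0 < N) (L : Matrix (Fin N) (Fin N) ℝ) (hL : L.IsSymm)
    (χ : Fin N → Fin N → ℝ) (lam : Fin N → ℝ)
    (horth : ∀ l l' : Fin N, ∑ n, χ l n * χ l' n = if l = l' then (1 : ℝ) else 0)
    (heig : ∀ l : Fin N, L.mulVec (χ l) = lam l • χ l)
    (lammax : ℝ) (hlam : ∀ l, lam l ∈ Set.Icc (0 : ℝ) lammax)
    (ghat : ℝ → ℝ) (i n : Fin N)
    (hd : 1 ≤ (graphOf L).dist i n)
    (p : Polynomial ℝ) (hdeg : p.natDegree ≤ (graphOf L).dist i n - 1)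
    (C : ℝ) (hC : ∀ x ∈ Set.Icc (0 : ℝ) lammax, |ghat x - p.eval x| ≤ C) :
    |gtrans χ i (kernelSig χ lam ghat) n| ≤ Real.sqrt N * C := by
  classical
  unfold gtrans kernelSig gft
  set G := graphOf L with hG
  -- completeness: ∑_l χ l m * χ l n = δ
  have hcomp : ∀ m n' : Fin N, ∑ l, χ l m * χ l n' = if m = n' then (1:ℝ) else 0 := by
    have hUU : (Matrix.of χ) * (Matrix.of χ).transpose = 1 := by
      ext l l'
      simpa [Matrix.mul_apply, Matrix.one_apply] using horth l l'
    have hUU' : (Matrix.of χ).transpose * (Matrix.of χ) = 1 := mul_eq_one_comm.mp hUU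
    intro m n'
    have := congrFun (congrFun hUU' m) n'
    simpa [Matrix.mul_apply, Matrix.one_apply] using this
  -- gft of kernelSig
  have hgft : ∀ l : Fin N, (∑ m, (∑ l', ghat (lam l') * χ l' m) * χ l m) = ghat (lam l) := by
    intro l
    simp_rw [Finset.sum_mul, mul_assoc]
    rw [Finset.sum_comm]
    simp_rw [← Finset.mul_sum, horth]
    simp
  -- eigen powers
  have heigpow : ∀ (k : ℕ) (l : Fin N), (L ^ k).mulVec (χ l) = (lam l) ^ k • χ l := by
    intro k l
    induction k with
    | zero => simp [Matrix.one_mulVec]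
    | succ k ih =>
      rw [pow_succ', ← Matrix.mulVec_mulVec, ih, Matrix.mulVec_smul, heig, smul_smul, ← pow_succ]
  -- spectral expansion of powers
  have hpow : ∀ k : ℕ, ∑ l, (lam l) ^ k * (χ l i * χ l n) = (L ^ k) i n := by
    intro k
    have h1 : ∀ l : Fin N, (lam l) ^ k * χ l i = ∑ m, (L ^ k) i m * χ l m := by
      intro l
      have := congrFun (heigpow k l) i
      simp only [Matrix.mulVec, dotProduct, Pi.smul_apply, smul_eq_mul] at this
      exact this.symm
    calc ∑ l, (lam l) ^ k * (χ l i * χ l n)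
        = ∑ l, ((lam l) ^ k * χ l i) * χ l n := by simp_rw [mul_assoc]
      _ = ∑ l, (∑ m, (L ^ k) i m * χ l m) * χ l n := by simp_rw [h1]
      _ = ∑ m, (L ^ k) i m * ∑ l, χ l m * χ l n := by
          simp_rw [Finset.sum_mul, mul_assoc]
          rw [Finset.sum_comm]
          simp_rw [← Finset.mul_sum]
      _ = (L ^ k) i n := by simp_rw [hcomp]; simp
  -- powers vanish below distance
  have hwalk : ∀ (k : ℕ) (a b : Fin N), (L ^ k) a b ≠ 0 → G.Reachable a b ∧ G.dist a b ≤ k := by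
    intro k
    induction k with
    | zero =>
      intro a b h
      have hab : a = b := by
        by_contra hne
        simp [Matrix.one_apply, hne] at h
      subst hab
      exact ⟨SimpleGraph.Reachable.refl a, by simp⟩
    | succ k ih =>
      intro a b h
      rw [pow_succ', Matrix.mul_apply] at h
      obtain ⟨m, hm⟩ : ∃ m, L a m * (L ^ k) m b ≠ 0 := by
        by_contra hc
        push_neg at hc
        exact h (Finset.sum_eq_zero fun m _ => hc m)
      have h1 : L a m ≠ 0 := fun h0 => hm (by simp [h0])
      obtain ⟨hr2, hd2⟩ := ih m b (fun h0 => hm (by simp [h0]))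
      by_cases hab : a = m
      · subst hab
        exact ⟨hr2, hd2.trans (Nat.le_succ k)⟩
      · have hadj : G.Adj a m := by
          rw [hG]
          unfold graphOf
          rw [SimpleGraph.fromRel_adj]
          exact ⟨hab, Or.inl h1⟩
        obtain ⟨w', hw'⟩ := hr2.exists_walk_length_eq_dist
        have hle := SimpleGraph.dist_le (SimpleGraph.Walk.cons hadj w')
        refine ⟨hadj.reachable.trans hr2, ?_⟩
        simp only [SimpleGraph.Walk.length_cons, hw'] at hle
        omega
  have hLk : ∀ k : ℕ, k ≤ p.natDegree → (L ^ k) i n = 0 := by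
    intro k hk
    by_contra h0
    have := (hwalk k i n h0).2
    omega
  -- polynomial term vanishes
  have hpoly : ∑ l, p.eval (lam l) * (χ l i * χ l n) = 0 := by
    have hev : ∀ x : ℝ, p.eval x = ∑ k ∈ Finset.range (p.natDegree + 1), p.coeff k * x ^ k := by
      intro x; exact Polynomial.eval_eq_sum_range x
    calc ∑ l, p.eval (lam l) * (χ l i * χ l n)
        = ∑ l, ∑ k ∈ Finset.range (p.natDegree + 1), p.coeff k * ((lam l) ^ k * (χ l i * χ l n)) := by
          simp_rw [hev, Finset.sum_mul, mul_assoc]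
      _ = ∑ k ∈ Finset.range (p.natDegree + 1), p.coeff k * ∑ l, (lam l) ^ k * (χ l i * χ l n) := by
          rw [Finset.sum_comm]; simp_rw [← Finset.mul_sum]
      _ = 0 := by
          apply Finset.sum_eq_zero
          intro k hk
          rw [hpow k, hLk k (by simpa using Nat.lt_succ_iff.mp (Finset.mem_range.mp hk))]
          ring
  -- main sum
  have hsum : ∑ l, (∑ m, (∑ l', ghat (lam l') * χ l' m) * χ l m) * χ l i * χ l n
      = ∑ l, (ghat (lam l) - p.eval (lam l)) * (χ l i * χ l n) := by
    rw [← sub_zero (∑ l, (∑ m, (∑ l', ghat (lam l') * χ l' m) * χ l m) * χ l i * χ l n), ← hpoly,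
      ← Finset.sum_sub_distrib]
    apply Finset.sum_congr rfl
    intro l _
    rw [hgft l]; ring
  -- bounds
  have hlmax : (0:ℝ) ≤ lammax := by
    have := hlam ⟨0, hN⟩
    exact le_trans this.1 this.2
  have hC0 : 0 ≤ C := le_trans (abs_nonneg _) (hC 0 ⟨le_refl _, hlmax⟩)
  have hCS : ∑ l, |χ l i| * |χ l n| ≤ 1 := by
    have h2 := Finset.sum_mul_sq_le_sq_mul_sq Finset.univ (fun l => |χ l i|) (fun l => |χ l n|)
    have hii : ∑ l, |χ l i| ^ 2 = 1 := by
      have h := hcomp i i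
      simp only [if_pos] at h
      rw [← h]
      exact Finset.sum_congr rfl fun l _ => by rw [sq_abs]; ring
    have hnn : ∑ l, |χ l n| ^ 2 = 1 := by
      have h := hcomp n n
      simp only [if_pos] at h
      rw [← h]
      exact Finset.sum_congr rfl fun l _ => by rw [sq_abs]; ring
    rw [hii, hnn, one_mul] at h2
    have hpos : (0:ℝ) ≤ ∑ l, |χ l i| * |χ l n| :=
      Finset.sum_nonneg fun l _ => mul_nonneg (abs_nonneg _) (abs_nonneg _)
    nlinarith
  have hbound : |∑ l, (ghat (lam l) - p.eval (lam l)) * (χ l i * χ l n)| ≤ C := by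
    calc |∑ l, (ghat (lam l) - p.eval (lam l)) * (χ l i * χ l n)|
        ≤ ∑ l, |(ghat (lam l) - p.eval (lam l)) * (χ l i * χ l n)| := Finset.abs_sum_le_sum_abs _ _
      _ ≤ ∑ l, C * (|χ l i| * |χ l n|) := by
          apply Finset.sum_le_sum
          intro l _
          rw [abs_mul, abs_mul]
          exact mul_le_mul (hC (lam l) (hlam l)) le_rfl
            (mul_nonneg (abs_nonneg _) (abs_nonneg _)) hC0
      _ = C * ∑ l, |χ l i| * |χ l n| := by rw [Finset.mul_sum]
      _ ≤ C * 1 := mul_le_mul_of_nonneg_left hCS hC0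
      _ = C := mul_one C
  rw [hsum, abs_mul, abs_of_nonneg (Real.sqrt_nonneg _)]
  exact mul_le_mul_of_nonneg_left hbound (Real.sqrt_nonneg _)
end

section
/- Hölder-type localization of translated kernels: let ĝ : [0, λ_max] → ℝ be a kernel, let g ∈ ℝ^N be the signal with graph Fourier coefficients ĝ(λ_ℓ), fix vertices i and n with d_in := d_G(i,n) ≥ 1, set K := d_in − 1, and let p, q ≥ 1 satisfy 1/p + 1/q = 1. Then for every real polynomial P of degree at most K, |(T_i g)(n)| ≤ √N · μ^{2(q−1)/q} · ( Σ_{ℓ=0}^{N−1} |ĝ(λ_ℓ) − P(λ_ℓ)|^p )^{1/p}. -/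
open Finset

section Aux
variable {N : ℕ}

lemma col_orth (χ : Fin N → Fin N → ℝ)
    (horth : ∀ l l' : Fin N, ∑ n, χ l n * χ l' n = if l = l' then (1 : ℝ) else 0)
    (m n : Fin N) : ∑ l, χ l m * χ l n = if m = n then (1 : ℝ) else 0 := by
  set U : Matrix (Fin N) (Fin N) ℝ := Matrix.of χ with hU
  have h1 : U * U.transpose = 1 := by
    ext l l'
    simp [Matrix.mul_apply, Matrix.transpose_apply, hU, horth l l', Matrix.one_apply]
  have h2 : U.transpose * U = 1 := mul_eq_one_comm.mp h1
  have := congrFun (congrFun (congrArg (fun M => (M : Matrix (Fin N) (Fin N) ℝ)) h2) m) n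
  simpa [Matrix.mul_apply, Matrix.transpose_apply, hU, Matrix.one_apply, mul_comm] using this

lemma pow_spec (L : Matrix (Fin N) (Fin N) ℝ) (χ : Fin N → Fin N → ℝ) (lam : Fin N → ℝ)
    (horth : ∀ l l' : Fin N, ∑ n, χ l n * χ l' n = if l = l' then (1 : ℝ) else 0)
    (heig : ∀ l : Fin N, L.mulVec (χ l) = lam l • χ l)
    (k : ℕ) (m n : Fin N) : (L ^ k) m n = ∑ l, lam l ^ k * χ l m * χ l n := by
  induction k generalizing m n with
  | zero => simpa [Matrix.one_apply, eq_comm] using (col_orth χ horth m n).symm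
  | succ k ih =>
    have : (L ^ (k+1)) m n = ∑ j, L m j * (L ^ k) j n := by
      rw [pow_succ']; simp [Matrix.mul_apply]
    rw [this]
    have hswap : ∀ j, L m j * (L ^ k) j n = ∑ l, lam l ^ k * (L m j * χ l j) * χ l n := by
      intro j; rw [ih]; rw [Finset.mul_sum]; apply Finset.sum_congr rfl; intro l _; ring
    simp_rw [hswap]
    rw [Finset.sum_comm]
    apply Finset.sum_congr rfl
    intro l _
    have hmv : ∑ j, L m j * χ l j = lam l * χ l m := by
      have := congrFun (heig l) m
      simpa [Matrix.mulVec, dotProduct] using this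
    have : (∑ j, lam l ^ k * (L m j * χ l j) * χ l n) = (lam l ^ k * (∑ j, L m j * χ l j)) * χ l n := by
      rw [Finset.mul_sum, Finset.sum_mul]
    rw [this, hmv]; ring

lemma pow_walk (L : Matrix (Fin N) (Fin N) ℝ) (k : ℕ) :
    ∀ m n : Fin N, (L ^ k) m n ≠ 0 → ∃ w : (graphOf L).Walk m n, w.length ≤ k := by
  induction k with
  | zero =>
    intro m n h
    have : m = n := by
      by_contra hmn
      simp [Matrix.one_apply, hmn] at h
    subst this
    exact ⟨SimpleGraph.Walk.nil, by simp⟩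
  | succ k ih =>
    intro m n h
    have hexp : (L ^ (k+1)) m n = ∑ j, L m j * (L ^ k) j n := by
      rw [pow_succ']; simp [Matrix.mul_apply]
    rw [hexp] at h
    obtain ⟨j, _, hj⟩ := Finset.exists_ne_zero_of_sum_ne_zero h
    have hLmj : L m j ≠ 0 := fun h0 => hj (by simp [h0])
    have hk : (L ^ k) j n ≠ 0 := fun h0 => hj (by simp [h0])
    obtain ⟨w, hw⟩ := ih j n hk
    by_cases hmj : m = j
    · subst hmj; exact ⟨w, le_trans hw (Nat.le_succ k)⟩
    · have hadj : (graphOf L).Adj m j := by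
        simp [graphOf, SimpleGraph.fromRel_adj, hmj, hLmj]
      exact ⟨SimpleGraph.Walk.cons hadj w, by simpa using Nat.succ_le_succ hw⟩
end Aux


/-- Hölder-type localization of translated kernels: with
K = d_G(i,n) − 1 and conjugate exponents p, q ≥ 1 (1/p + 1/q = 1), for every
polynomial P of degree at most K,
|(T_i g)(n)| ≤ √N · μ^{2(q−1)/q} · (Σ_ℓ |ĝ(λ_ℓ) − P(λ_ℓ)|^p)^{1/p}. -/
theorem translated_kernel_localization_holder
    (N : ℕ) (hN : 0 < N) (L : Matrix (Fin N) (Fin N) ℝ) (hL : L.IsSymm)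
    (χ : Fin N → Fin N → ℝ) (lam : Fin N → ℝ)
    (horth : ∀ l l' : Fin N, ∑ n, χ l n * χ l' n = if l = l' then (1 : ℝ) else 0)
    (heig : ∀ l : Fin N, L.mulVec (χ l) = lam l • χ l)
    (lammax : ℝ) (hlam : ∀ l, lam l ∈ Set.Icc (0 : ℝ) lammax)
    (μ : ℝ) (hμ : IsGreatest {x : ℝ | ∃ l j : Fin N, x = |χ l j|} μ)
    (ghat : ℝ → ℝ) (i n : Fin N)
    (hd : 1 ≤ (graphOf L).dist i n)
    (p q : ℝ) (hp : 1 ≤ p) (hq : 1 ≤ q) (hpq : 1 / p + 1 / q = 1)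
    (P : Polynomial ℝ) (hdeg : P.natDegree ≤ (graphOf L).dist i n - 1) :
    |gtrans χ i (kernelSig χ lam ghat) n| ≤
      Real.sqrt N * μ ^ (2 * (q - 1) / q) *
        (∑ l, |ghat (lam l) - P.eval (lam l)| ^ p) ^ (1 / p) := by
  have hp0 : (0:ℝ) < p := lt_of_lt_of_le one_pos hp
  have hq0 : (0:ℝ) < q := lt_of_lt_of_le one_pos hq
  have hp1 : 1 < p := by
    have h1 : 1 / p < 1 := by
      have : 0 < 1 / q := by positivity
      linarith
    have := (div_lt_one hp0).mp h1
    linarith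
  have hpq' : Real.HolderConjugate p q := Real.holderConjugate_iff.mpr ⟨hp1, by rw [inv_eq_one_div, inv_eq_one_div]; exact hpq⟩
  -- μ facts
  have hμub : ∀ l j : Fin N, |χ l j| ≤ μ := fun l j => hμ.2 ⟨l, j, rfl⟩
  have hμpos : 0 < μ := by
    by_contra hc
    push_neg at hc
    have h0 : ∀ l j : Fin N, χ l j = 0 := by
      intro l j
      have := hμub l j
      have := abs_nonneg (χ l j)
      have : |χ l j| = 0 := le_antisymm (by linarith) (abs_nonneg _)
      exact abs_eq_zero.mp this
    have l0 : Fin N := ⟨0, hN⟩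
    have := horth l0 l0
    simp [h0] at this
  -- gft of kernelSig
  have hgft : ∀ l, gft χ (kernelSig χ lam ghat) l = ghat (lam l) := by
    intro l
    unfold gft kernelSig
    have h1 : ∀ m : Fin N, (∑ l', ghat (lam l') * χ l' m) * χ l m
        = ∑ l', ghat (lam l') * (χ l' m * χ l m) := by
      intro m; rw [Finset.sum_mul]; apply Finset.sum_congr rfl; intro l' _; ring
    simp_rw [h1]
    rw [Finset.sum_comm]
    have h2 : ∀ l' : Fin N, ∑ m, ghat (lam l') * (χ l' m * χ l m)
        = ghat (lam l') * (if l' = l then (1:ℝ) else 0) := by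
      intro l'; rw [← Finset.mul_sum, horth l' l]
    simp_rw [h2]
    simp
  -- polynomial part vanishes
  have hPzero : ∑ l, P.eval (lam l) * (χ l i * χ l n) = 0 := by
    have hvanish : ∀ k : ℕ, k ≤ P.natDegree → (L ^ k) i n = 0 := by
      intro k hk
      by_contra hc
      obtain ⟨w, hw⟩ := pow_walk L k i n hc
      have hdist : (graphOf L).dist i n ≤ k := le_trans (SimpleGraph.dist_le w) hw
      omega
    have heval : ∀ l, P.eval (lam l)
        = ∑ k ∈ Finset.range (P.natDegree + 1), P.coeff k * lam l ^ k := by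
      intro l; exact Polynomial.eval_eq_sum_range (p := P) (lam l)
    calc ∑ l, P.eval (lam l) * (χ l i * χ l n)
        = ∑ l, ∑ k ∈ Finset.range (P.natDegree + 1), P.coeff k * (lam l ^ k * (χ l i * χ l n)) := by
          apply Finset.sum_congr rfl; intro l _
          rw [heval l, Finset.sum_mul]
          apply Finset.sum_congr rfl; intro k _; ring
      _ = ∑ k ∈ Finset.range (P.natDegree + 1), P.coeff k * ∑ l, lam l ^ k * (χ l i * χ l n) := by
          rw [Finset.sum_comm]
          apply Finset.sum_congr rfl; intro k _
          rw [Finset.mul_sum]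
      _ = 0 := by
          apply Finset.sum_eq_zero
          intro k hk
          have hkle : k ≤ P.natDegree := Nat.lt_succ_iff.mp (Finset.mem_range.mp hk)
          have : ∑ l, lam l ^ k * (χ l i * χ l n) = (L ^ k) i n := by
            rw [pow_spec L χ lam horth heig k i n]
            apply Finset.sum_congr rfl; intro l _; ring
          rw [this, hvanish k hkle, mul_zero]
  -- rewrite gtrans value
  have hval : gtrans χ i (kernelSig χ lam ghat) n
      = Real.sqrt N * ∑ l, (ghat (lam l) - P.eval (lam l)) * (χ l i * χ l n) := by
    unfold gtrans
    congr 1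
    have : ∑ l, (ghat (lam l) - P.eval (lam l)) * (χ l i * χ l n)
        = (∑ l, ghat (lam l) * (χ l i * χ l n)) - ∑ l, P.eval (lam l) * (χ l i * χ l n) := by
      rw [← Finset.sum_sub_distrib]
      apply Finset.sum_congr rfl; intro l _; ring
    rw [this, hPzero, sub_zero]
    apply Finset.sum_congr rfl; intro l _
    rw [hgft l]; ring
  set a : Fin N → ℝ := fun l => ghat (lam l) - P.eval (lam l) with ha
  set t : Fin N → ℝ := fun l => |χ l i| * |χ l n| with ht
  have htnn : ∀ l, 0 ≤ t l := fun l => mul_nonneg (abs_nonneg _) (abs_nonneg _)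
  -- step 1: |Σ a * b| ≤ Σ |a| * t
  have habs : |∑ l, a l * (χ l i * χ l n)| ≤ ∑ l, |a l| * t l := by
    refine le_trans (Finset.abs_sum_le_sum_abs _ _) ?_
    apply Finset.sum_le_sum; intro l _
    rw [abs_mul, abs_mul]
  -- Hölder
  have hholder : ∑ l, |a l| * t l
      ≤ (∑ l, |a l| ^ p) ^ (1/p) * (∑ l, t l ^ q) ^ (1/q) := by
    have h := Real.inner_le_Lp_mul_Lq Finset.univ (fun l => |a l|) t hpq'
    simp only [abs_abs] at h
    have habs_t : ∀ l : Fin N, |t l| = t l := fun l => abs_of_nonneg (htnn l)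
    simp only [habs_t] at h
    exact h
  -- tail bound
  have hti : ∑ l, (χ l i) ^ 2 = 1 := by
    have := col_orth χ horth i i
    simpa [pow_two] using this
  have htn : ∑ l, (χ l n) ^ 2 = 1 := by
    have := col_orth χ horth n n
    simpa [pow_two] using this
  have hsum1 : ∑ l, t l ≤ 1 := by
    have hcs : (∑ l, |χ l i| * |χ l n|) ^ 2 ≤ (∑ l, |χ l i| ^ 2) * (∑ l, |χ l n| ^ 2) :=
      Finset.sum_mul_sq_le_sq_mul_sq Finset.univ _ _
    have hsq : (∑ l, t l) ^ 2 ≤ 1 := by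
      have e1 : ∑ l, |χ l i| ^ 2 = 1 := by simpa [sq_abs] using hti
      have e2 : ∑ l, |χ l n| ^ 2 = 1 := by simpa [sq_abs] using htn
      calc (∑ l, t l) ^ 2 ≤ (∑ l, |χ l i| ^ 2) * (∑ l, |χ l n| ^ 2) := hcs
        _ = 1 := by rw [e1, e2, mul_one]
    nlinarith [Finset.sum_nonneg (fun l (_ : l ∈ Finset.univ) => htnn l)]
  have htle : ∀ l, t l ≤ μ ^ (2:ℝ) := by
    intro l
    have h : t l ≤ μ * μ := mul_le_mul (hμub l i) (hμub l n) (abs_nonneg _) (le_of_lt hμpos)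
    calc t l ≤ μ * μ := h
      _ = μ ^ (2:ℝ) := by
        rw [show ((2:ℝ)) = ((2:ℕ):ℝ) by norm_num, Real.rpow_natCast]; ring
  have hq1' : (0:ℝ) ≤ q - 1 := by linarith
  have htq : ∑ l, t l ^ q ≤ μ ^ (2 * (q - 1)) := by
    have hstep : ∀ l, t l ^ q ≤ μ ^ (2 * (q - 1)) * t l := by
      intro l
      rcases eq_or_lt_of_le (htnn l) with h0 | h0
      · rw [← h0, Real.zero_rpow (by positivity), mul_zero]
      · have he : t l ^ q = t l ^ (q - 1) * t l := by
          rw [← Real.rpow_add_one (ne_of_gt h0)]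
          ring_nf
        rw [he]
        apply mul_le_mul_of_nonneg_right _ (htnn l)
        calc t l ^ (q - 1) ≤ (μ ^ (2:ℝ)) ^ (q - 1) :=
              Real.rpow_le_rpow (htnn l) (htle l) hq1'
          _ = μ ^ (2 * (q - 1)) := by
              rw [← Real.rpow_mul (le_of_lt hμpos)]
    calc ∑ l, t l ^ q ≤ ∑ l, μ ^ (2 * (q - 1)) * t l := Finset.sum_le_sum fun l _ => hstep l
      _ = μ ^ (2 * (q - 1)) * ∑ l, t l := by rw [Finset.mul_sum]
      _ ≤ μ ^ (2 * (q - 1)) * 1 :=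
          mul_le_mul_of_nonneg_left hsum1 (le_of_lt (Real.rpow_pos_of_pos hμpos _))
      _ = μ ^ (2 * (q - 1)) := mul_one _
  have htail : (∑ l, t l ^ q) ^ (1/q) ≤ μ ^ (2 * (q - 1) / q) := by
    have h1 : (∑ l, t l ^ q) ^ (1/q) ≤ (μ ^ (2 * (q - 1))) ^ (1/q) :=
      Real.rpow_le_rpow (Finset.sum_nonneg fun l _ => Real.rpow_nonneg (htnn l) q)
        htq (by positivity)
    calc (∑ l, t l ^ q) ^ (1/q) ≤ (μ ^ (2 * (q - 1))) ^ (1/q) := h1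
      _ = μ ^ (2 * (q - 1) / q) := by
          rw [← Real.rpow_mul (le_of_lt hμpos)]
          ring_nf
  have hNsqrt : (0:ℝ) ≤ Real.sqrt N := Real.sqrt_nonneg _
  have hA : (0:ℝ) ≤ (∑ l, |a l| ^ p) ^ (1/p) :=
    Real.rpow_nonneg (Finset.sum_nonneg fun l _ => Real.rpow_nonneg (abs_nonneg _) p) _
  have hfin : |∑ l, a l * (χ l i * χ l n)|
      ≤ μ ^ (2 * (q - 1) / q) * (∑ l, |a l| ^ p) ^ (1/p) := by
    calc |∑ l, a l * (χ l i * χ l n)| ≤ ∑ l, |a l| * t l := habs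
      _ ≤ (∑ l, |a l| ^ p) ^ (1/p) * (∑ l, t l ^ q) ^ (1/q) := hholder
      _ ≤ (∑ l, |a l| ^ p) ^ (1/p) * (μ ^ (2 * (q - 1) / q)) :=
          mul_le_mul_of_nonneg_left htail hA
      _ = μ ^ (2 * (q - 1) / q) * (∑ l, |a l| ^ p) ^ (1/p) := mul_comm _ _
  rw [hval, abs_mul, abs_of_nonneg hNsqrt, mul_assoc]
  exact mul_le_mul_of_nonneg_left hfin hNsqrt
end

section
/- Localization of modulated kernels in the graph spectral domain: assume χ_0(n) = 1/√N for all n and that the eigenvalues λ_0, ..., λ_{N−1} are distinct. Suppose f ∈ ℝ^N and γ > 0 satisfy √N · Σ_{ℓ=1}^{N−1} μ_ℓ |f̂(ℓ)| ≤ |f̂(0)| / (1+γ), where μ_ℓ := max_{i} |χ_ℓ(i)|. Then for every k and every ℓ ≠ k, |(M_k f)^(k)| ≥ γ · |(M_k f)^(ℓ)|, where (M_k f)^ denotes the graph Fourier transform of M_k f. -/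
open Finset

/-- Localization of modulated kernels in the graph spectral domain:
if χ₀ ≡ 1/√N, the eigenvalues are distinct, and
√N · Σ_{ℓ≠0} μ_ℓ |f̂(ℓ)| ≤ |f̂(0)|/(1+γ), then for every k and every ℓ ≠ k,
|(M_k f)^(k)| ≥ γ·|(M_k f)^(ℓ)|. -/
theorem modulated_kernel_spectral_localization
    (N : ℕ) (hN : 0 < N) (χ : Fin N → Fin N → ℝ) (lam : Fin N → ℝ)
    (horth : ∀ l l' : Fin N, ∑ n, χ l n * χ l' n = if l = l' then (1 : ℝ) else 0)
    (hχ0 : ∀ n, χ ⟨0, hN⟩ n = 1 / Real.sqrt N)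
    (hinj : Function.Injective lam)
    (muL : Fin N → ℝ)
    (hmuL : ∀ l : Fin N, IsGreatest (Set.range fun j => |χ l j|) (muL l))
    (f : Fin N → ℝ) (γ : ℝ) (hγ : 0 < γ)
    (hcond : Real.sqrt N * ∑ l ∈ Finset.univ.erase (⟨0, hN⟩ : Fin N), muL l * |gft χ f l|
      ≤ |gft χ f ⟨0, hN⟩| / (1 + γ))
    (k l : Fin N) (hlk : l ≠ k) :
    γ * |gft χ (gmod χ k f) l| ≤ |gft χ (gmod χ k f) k| := by
  classical
  set z : Fin N := ⟨0, hN⟩ with hz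
  have hNpos : (0:ℝ) < N := by exact_mod_cast hN
  have hsq : (0:ℝ) < Real.sqrt N := Real.sqrt_pos.mpr hNpos
  -- column orthonormality
  have hcol : ∀ p q : Fin N, ∑ m, χ m p * χ m q = if p = q then (1:ℝ) else 0 := by
    have h1 : (Matrix.of χ) * Matrix.transpose (Matrix.of χ) = 1 := by
      ext a b
      simpa [Matrix.mul_apply, Matrix.one_apply] using horth a b
    have h2 := mul_eq_one_comm.mp h1
    intro p q
    have h3 := congrFun (congrFun h2 p) q
    simpa [Matrix.mul_apply, Matrix.one_apply] using h3
  -- decomposition of f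
  have hdec : ∀ n, f n = ∑ m, gft χ f m * χ m n := by
    intro n
    unfold gft
    have : ∑ m, (∑ p, f p * χ m p) * χ m n = ∑ p, f p * ∑ m, χ m p * χ m n := by
      simp_rw [Finset.sum_mul, Finset.mul_sum, mul_assoc]
      exact Finset.sum_comm
    rw [this]
    simp [hcol]
  set S : Fin N → Fin N → ℝ := fun m l' => ∑ n, χ m n * (χ k n * χ l' n) with hS
  -- expansion of gft of gmod
  have hexp : ∀ l', gft χ (gmod χ k f) l' = Real.sqrt N * ∑ m, gft χ f m * S m l' := by
    intro l'
    unfold gft gmod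
    simp_rw [mul_assoc, ← Finset.mul_sum]
    congr 1
    calc ∑ n, f n * (χ k n * χ l' n)
        = ∑ n, (∑ m, gft χ f m * χ m n) * (χ k n * χ l' n) := by
          apply Finset.sum_congr rfl
          intro n _
          rw [← hdec n]
      _ = ∑ m, gft χ f m * S m l' := by
          simp_rw [Finset.sum_mul, mul_assoc, hS]
          rw [Finset.sum_comm]
          simp [Finset.mul_sum]
  -- value of S at z
  have hSz : ∀ l', S z l' = (1 / Real.sqrt N) * (if k = l' then (1:ℝ) else 0) := by
    intro l'
    simp only [hS, hχ0]
    rw [← Finset.mul_sum, horth k l']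
  -- split off m = z
  have hsplit : ∀ l', gft χ (gmod χ k f) l' =
      (if k = l' then gft χ f z else 0) +
      Real.sqrt N * ∑ m ∈ Finset.univ.erase z, gft χ f m * S m l' := by
    intro l'
    rw [hexp l', ← Finset.sum_erase_add _ _ (Finset.mem_univ z), mul_add, add_comm]
    congr 1
    rw [hSz l']
    have : Real.sqrt N * (1 / Real.sqrt N) = 1 := by
      field_simp
    by_cases h : k = l' <;> simp [h] <;> ring_nf <;>
      field_simp
  -- mu nonneg and bound
  have hmu_nonneg : ∀ m, 0 ≤ muL m := by
    intro m
    obtain ⟨j, hj⟩ := (hmuL m).1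
    rw [← hj]; positivity
  have hmu_bd : ∀ m n, |χ m n| ≤ muL m := by
    intro m n
    exact (hmuL m).2 ⟨n, rfl⟩
  -- Cauchy-Schwarz bound
  have hD : ∀ l', ∑ n, |χ k n| * |χ l' n| ≤ 1 := by
    intro l'
    have hcs := Finset.sum_mul_sq_le_sq_mul_sq Finset.univ (fun n => |χ k n|) (fun n => |χ l' n|)
    have h1 : ∑ n, |χ k n| ^ 2 = 1 := by
      have := horth k k
      simp only [if_pos rfl] at this
      simp_rw [sq_abs, sq]
      exact this
    have h2 : ∑ n, |χ l' n| ^ 2 = 1 := by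
      have := horth l' l'
      simp only [if_pos rfl] at this
      simp_rw [sq_abs, sq]
      exact this
    rw [h1, h2, mul_one] at hcs
    have hDn : (0:ℝ) ≤ ∑ n, |χ k n| * |χ l' n| := by positivity
    nlinarith [hcs, hDn]
  have hSbd : ∀ m l', |S m l'| ≤ muL m := by
    intro m l'
    calc |S m l'| ≤ ∑ n, |χ m n * (χ k n * χ l' n)| := Finset.abs_sum_le_sum_abs _ _
      _ ≤ ∑ n, muL m * (|χ k n| * |χ l' n|) := by
          apply Finset.sum_le_sum
          intro n _
          rw [abs_mul, abs_mul]
          exact mul_le_mul_of_nonneg_right (hmu_bd m n) (by positivity)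
      _ = muL m * ∑ n, |χ k n| * |χ l' n| := by rw [Finset.mul_sum]
      _ ≤ muL m * 1 := mul_le_mul_of_nonneg_left (hD l') (hmu_nonneg m)
      _ = muL m := mul_one _
  set C : ℝ := Real.sqrt N * ∑ m ∈ Finset.univ.erase z, muL m * |gft χ f m| with hC
  have hT : ∀ l', |Real.sqrt N * ∑ m ∈ Finset.univ.erase z, gft χ f m * S m l'| ≤ C := by
    intro l'
    rw [abs_mul, abs_of_pos hsq]
    apply mul_le_mul_of_nonneg_left _ hsq.le
    calc |∑ m ∈ Finset.univ.erase z, gft χ f m * S m l'|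
        ≤ ∑ m ∈ Finset.univ.erase z, |gft χ f m * S m l'| := Finset.abs_sum_le_sum_abs _ _
      _ ≤ ∑ m ∈ Finset.univ.erase z, muL m * |gft χ f m| := by
          apply Finset.sum_le_sum
          intro m _
          rw [abs_mul, mul_comm]
          exact mul_le_mul_of_nonneg_right (hSbd m l') (abs_nonneg _)
  -- conclude
  set A : ℝ := |gft χ f z| with hA
  have hAn : 0 ≤ A := abs_nonneg _
  have hCA : C ≤ A / (1 + γ) := hcond
  have hgl : |gft χ (gmod χ k f) l| ≤ C := by
    have h := hsplit l
    rw [if_neg (fun h' => hlk h'.symm), zero_add] at h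
    rw [h]; exact hT l
  have hgk : A - C ≤ |gft χ (gmod χ k f) k| := by
    have h := hsplit k
    rw [if_pos rfl] at h
    have := hT k
    calc A - C ≤ |gft χ f z| - |Real.sqrt N * ∑ m ∈ Finset.univ.erase z, gft χ f m * S m k| :=
          by simp only [hA]; linarith
      _ ≤ |gft χ f z + Real.sqrt N * ∑ m ∈ Finset.univ.erase z, gft χ f m * S m k| := by
          have := abs_sub_abs_le_abs_sub (gft χ f z) (-(Real.sqrt N * ∑ m ∈ Finset.univ.erase z, gft χ f m * S m k))
          rw [abs_neg, sub_neg_eq_add] at this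
          linarith
      _ = |gft χ (gmod χ k f) k| := by rw [h]
  have hkey : γ * (A / (1 + γ)) = A - A / (1 + γ) := by
    field_simp
    ring
  have h1 : γ * |gft χ (gmod χ k f) l| ≤ γ * C := mul_le_mul_of_nonneg_left hgl hγ.le
  have h2 : γ * C ≤ γ * (A / (1 + γ)) := mul_le_mul_of_nonneg_left hCA hγ.le
  linarith
end

section
/- Energy concentration of modulated kernels: assume χ_0(n) = 1/√N for all n. Suppose f ∈ ℝ^N and γ > 0 satisfy √N · Σ_{ℓ=1}^{N−1} μ_ℓ |f̂(ℓ)| ≤ |f̂(0)| / (1+γ), where μ_ℓ := max_{i} |χ_ℓ(i)|. Then for every k, |(M_k f)^(k)|^2 / ‖M_k f‖_2^2 ≥ γ^2 / (N + 3 + 4γ + γ^2), where (M_k f)^ denotes the graph Fourier transform of M_k f. -/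
open Finset

lemma concentration_aux (Nr A t γ : ℝ) (hN : 1 ≤ Nr) (hγ : 0 < γ) (ht0 : 0 ≤ t)
    (hAt : (1 + γ) * t ≤ A) :
    γ ^ 2 * (A + t) ^ 2 ≤ (Nr + 3 + 4 * γ + γ ^ 2) * (A - t) ^ 2 := by
  have hA0 : 0 ≤ A := le_trans (by nlinarith) hAt
  have h5 : γ * (A + t) ≤ (2 + γ) * (A - t) := by nlinarith
  have h6 : 0 ≤ γ * (A + t) := mul_nonneg hγ.le (by nlinarith)
  nlinarith [mul_self_le_mul_self h6 h5, sq_nonneg (A - t)]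

/-- Energy concentration of modulated kernels: if χ₀ ≡ 1/√N and
√N · Σ_{ℓ≠0} μ_ℓ |f̂(ℓ)| ≤ |f̂(0)|/(1+γ), then for every k,
|(M_k f)^(k)|² / ‖M_k f‖₂² ≥ γ² / (N + 3 + 4γ + γ²), stated in the equivalent
cross-multiplied form. -/
theorem modulated_kernel_energy_concentration
    (N : ℕ) (hN : 0 < N) (χ : Fin N → Fin N → ℝ)
    (horth : ∀ l l' : Fin N, ∑ n, χ l n * χ l' n = if l = l' then (1 : ℝ) else 0)
    (hχ0 : ∀ n, χ ⟨0, hN⟩ n = 1 / Real.sqrt N)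
    (muL : Fin N → ℝ)
    (hmuL : ∀ l : Fin N, IsGreatest (Set.range fun j => |χ l j|) (muL l))
    (f : Fin N → ℝ) (γ : ℝ) (hγ : 0 < γ)
    (hcond : Real.sqrt N * ∑ l ∈ Finset.univ.erase (⟨0, hN⟩ : Fin N), muL l * |gft χ f l|
      ≤ |gft χ f ⟨0, hN⟩| / (1 + γ))
    (k : Fin N) :
    γ ^ 2 * (∑ n, (gmod χ k f n) ^ 2) ≤
      ((N : ℝ) + 3 + 4 * γ + γ ^ 2) * (gft χ (gmod χ k f) k) ^ 2 := by
  set z : Fin N := ⟨0, hN⟩ with hz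
  set s : ℝ := Real.sqrt N with hs
  have hNpos : (0 : ℝ) < N := by exact_mod_cast hN
  have hNge1 : (1 : ℝ) ≤ N := by exact_mod_cast hN
  have hs0 : 0 < s := Real.sqrt_pos.mpr hNpos
  have hs2 : s ^ 2 = N := Real.sq_sqrt hNpos.le
  -- inversion formula for the orthogonal matrix χ
  have hinv : ∀ n n' : Fin N, ∑ l, χ l n * χ l n' = if n = n' then (1 : ℝ) else 0 := by
    let A : Matrix (Fin N) (Fin N) ℝ := Matrix.of χ
    have hA : A * A.transpose = 1 := by
      ext l l'
      simp only [Matrix.mul_apply, Matrix.transpose_apply, Matrix.of_apply, A,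
        Matrix.one_apply]
      exact horth l l'
    have hA' : A.transpose * A = 1 := mul_eq_one_comm.mp hA
    intro n n'
    have h := congrFun (congrFun hA' n) n'
    simpa [Matrix.mul_apply, Matrix.transpose_apply, Matrix.of_apply, A,
      Matrix.one_apply] using h
  have frec : ∀ n, f n = ∑ l, gft χ f l * χ l n := by
    intro n
    simp only [gft, Finset.sum_mul]
    rw [Finset.sum_comm]
    have h1 : ∀ m : Fin N, ∑ l, f m * χ l m * χ l n = f m * ∑ l, χ l m * χ l n := by
      intro m; rw [Finset.mul_sum]; exact Finset.sum_congr rfl fun l _ => by ring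
    rw [Finset.sum_congr rfl fun m _ => h1 m]
    simp_rw [hinv]
    simp
  set a : ℝ := gft χ f z with ha
  set S : ℝ := ∑ l ∈ Finset.univ.erase z, muL l * |gft χ f l| with hS
  have hmu_bd : ∀ l n, |χ l n| ≤ muL l := fun l n => (hmuL l).2 ⟨n, rfl⟩
  have hmu_nonneg : ∀ l, 0 ≤ muL l := fun l => le_trans (abs_nonneg _) (hmu_bd l z)
  have hS0 : 0 ≤ S :=
    Finset.sum_nonneg fun l _ => mul_nonneg (hmu_nonneg l) (abs_nonneg _)
  set r : Fin N → ℝ := fun n => ∑ l ∈ Finset.univ.erase z, gft χ f l * χ l n with hr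
  have hfr : ∀ n, f n = a / s + r n := by
    intro n
    rw [frec n, ← Finset.sum_erase_add _ _ (Finset.mem_univ z), hχ0 n]
    simp only [ha, hr, hs]
    ring
  have hrS : ∀ n, |r n| ≤ S := by
    intro n
    calc |r n| ≤ ∑ l ∈ Finset.univ.erase z, |gft χ f l * χ l n| :=
          Finset.abs_sum_le_sum_abs _ _
      _ ≤ S := Finset.sum_le_sum fun l _ => by
          rw [abs_mul, mul_comm]
          exact mul_le_mul_of_nonneg_right (hmu_bd l n) (abs_nonneg _)
  have hsum1 : ∑ n, (χ k n) ^ 2 = 1 := by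
    have h := horth k k; simpa [sq] using h
  have hgft : gft χ (gmod χ k f) k = s * ∑ n, f n * (χ k n) ^ 2 := by
    simp only [gft, gmod]
    rw [Finset.mul_sum]
    exact Finset.sum_congr rfl fun n _ => by ring
  set c : ℝ := ∑ n, r n * (χ k n) ^ 2 with hc
  have hsplit : ∑ n, f n * (χ k n) ^ 2 = a / s + c := by
    have h1 : ∀ n, f n * (χ k n) ^ 2 = a / s * (χ k n) ^ 2 + r n * (χ k n) ^ 2 := by
      intro n; rw [hfr n]; ring
    rw [Finset.sum_congr rfl fun n _ => h1 n, Finset.sum_add_distrib, ← Finset.mul_sum,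
      hsum1, mul_one]
  have hcS : |c| ≤ S := by
    calc |c| ≤ ∑ n, |r n * (χ k n) ^ 2| := Finset.abs_sum_le_sum_abs _ _
      _ ≤ ∑ n, S * (χ k n) ^ 2 := Finset.sum_le_sum fun n _ => by
          rw [abs_mul, abs_of_nonneg (sq_nonneg (χ k n))]
          exact mul_le_mul_of_nonneg_right (hrS n) (sq_nonneg _)
      _ = S := by rw [← Finset.mul_sum, hsum1, mul_one]
  have hgft2 : gft χ (gmod χ k f) k = a + s * c := by
    rw [hgft, hsplit, mul_add]
    congr 1
    field_simp
  have hnorm : ∑ n, (gmod χ k f n) ^ 2 = s ^ 2 * ∑ n, (f n) ^ 2 * (χ k n) ^ 2 := by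
    simp only [gmod]
    rw [Finset.mul_sum]
    exact Finset.sum_congr rfl fun n _ => by ring
  set A : ℝ := |a| with hA
  set t : ℝ := s * S with ht
  have ht0 : 0 ≤ t := mul_nonneg hs0.le hS0
  have hA0 : 0 ≤ A := abs_nonneg a
  have hcond' : (1 + γ) * t ≤ A := by
    have h := (le_div_iff₀ (by linarith : (0 : ℝ) < 1 + γ)).mp hcond
    linarith [h]
  have htA : t ≤ A := by nlinarith
  -- energy bound
  have hfb : ∀ n, (f n) ^ 2 ≤ (A / s + S) ^ 2 := by
    intro n
    have h1 : |f n| ≤ A / s + S := by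
      rw [hfr n]
      calc |a / s + r n| ≤ |a / s| + |r n| := abs_add_le _ _
        _ ≤ A / s + S := by
            rw [abs_div, abs_of_pos hs0]
            exact add_le_add le_rfl (hrS n)
    calc (f n) ^ 2 = |f n| ^ 2 := (sq_abs _).symm
      _ ≤ (A / s + S) ^ 2 := pow_le_pow_left₀ (abs_nonneg _) h1 2
  have hE : ∑ n, (f n) ^ 2 * (χ k n) ^ 2 ≤ (A / s + S) ^ 2 := by
    calc ∑ n, (f n) ^ 2 * (χ k n) ^ 2 ≤ ∑ n, (A / s + S) ^ 2 * (χ k n) ^ 2 :=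
          Finset.sum_le_sum fun n _ => mul_le_mul_of_nonneg_right (hfb n) (sq_nonneg _)
      _ = (A / s + S) ^ 2 := by rw [← Finset.mul_sum, hsum1, mul_one]
  have key1 : γ ^ 2 * (∑ n, (gmod χ k f n) ^ 2) ≤ γ ^ 2 * (A + t) ^ 2 := by
    rw [hnorm]
    have h3 : s ^ 2 * (A / s + S) ^ 2 = (A + t) ^ 2 := by
      rw [← mul_pow]
      congr 1
      field_simp
      rw [ht]
    have h2 : s ^ 2 * (∑ n, (f n) ^ 2 * (χ k n) ^ 2) ≤ (A + t) ^ 2 :=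
      h3 ▸ mul_le_mul_of_nonneg_left hE (sq_nonneg s)
    exact mul_le_mul_of_nonneg_left h2 (sq_nonneg γ)
  have key2 : (A - t) ^ 2 ≤ (gft χ (gmod χ k f) k) ^ 2 := by
    rw [hgft2]
    have hsc : |s * c| ≤ t := by
      rw [abs_mul, abs_of_pos hs0]
      exact mul_le_mul_of_nonneg_left hcS hs0.le
    have habs : A - t ≤ |a + s * c| := by
      have h := abs_add_le (a + s * c) (-(s * c))
      simp only [add_neg_cancel_right, abs_neg] at h
      linarith
    calc (A - t) ^ 2 ≤ |a + s * c| ^ 2 :=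
          pow_le_pow_left₀ (by linarith) habs 2
      _ = (a + s * c) ^ 2 := sq_abs _
  have hfin : γ ^ 2 * (A + t) ^ 2 ≤ ((N : ℝ) + 3 + 4 * γ + γ ^ 2) * (A - t) ^ 2 :=
    concentration_aux (N : ℝ) A t γ hNge1 hγ ht0 hcond'
  have hC : (0 : ℝ) ≤ (N : ℝ) + 3 + 4 * γ + γ ^ 2 := by positivity
  calc γ ^ 2 * (∑ n, (gmod χ k f n) ^ 2) ≤ γ ^ 2 * (A + t) ^ 2 := key1
    _ ≤ ((N : ℝ) + 3 + 4 * γ + γ ^ 2) * (A - t) ^ 2 := hfin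
    _ ≤ ((N : ℝ) + 3 + 4 * γ + γ ^ 2) * (gft χ (gmod χ k f) k) ^ 2 :=
        mul_le_mul_of_nonneg_left key2 hC
end

section
/- Exact energy identity for the windowed graph Fourier transform: for every window g ∈ ℝ^N and every signal f ∈ ℝ^N, Σ_{i=1}^{N} Σ_{k=0}^{N−1} |⟨f, g_{i,k}⟩|^2 = N · Σ_{n=1}^{N} |f(n)|^2 · ‖T_n g‖_2^2. Consequently, if ĝ(0) ≠ 0 and χ_0(n) = 1/√N for all n, then the collection {g_{i,k}} is a frame: A‖f‖_2^2 ≤ Σ_{i,k} |⟨f, g_{i,k}⟩|^2 ≤ B‖f‖_2^2 for all f, where A := min_n N‖T_n g‖_2^2 ≥ N|ĝ(0)|^2 > 0 and B := max_n N‖T_n g‖_2^2 ≤ N^2 μ^2 ‖g‖_2^2. -/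
open Finset

lemma parseval_aux {N : ℕ} (ψ : Fin N → Fin N → ℝ)
    (ho : ∀ a b : Fin N, ∑ n, ψ a n * ψ b n = if a = b then (1:ℝ) else 0)
    (h : Fin N → ℝ) : ∑ m, (∑ l, h l * ψ l m)^2 = ∑ l, (h l)^2 := by
  have expand : ∀ m, (∑ l, h l * ψ l m)^2
      = ∑ a, ∑ b, (h a * h b) * (ψ a m * ψ b m) := by
    intro m
    rw [sq, Finset.sum_mul_sum]
    exact Finset.sum_congr rfl fun a _ => Finset.sum_congr rfl fun b _ => by ring
  simp_rw [expand]
  rw [Finset.sum_comm]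
  refine Finset.sum_congr rfl fun a _ => ?_
  rw [Finset.sum_comm]
  calc ∑ b, ∑ m, (h a * h b) * (ψ a m * ψ b m)
      = ∑ b, (h a * h b) * ∑ m, ψ a m * ψ b m := by
        simp_rw [Finset.mul_sum]
    _ = (h a)^2 := by
        simp_rw [ho]
        simp [mul_ite, Finset.sum_ite_eq, sq]

/-- Exact energy identity for the windowed graph Fourier transform,
and the frame property: Σ_{i,k} |⟨f, g_{i,k}⟩|² = N·Σₙ |f(n)|²·‖T_n g‖₂² for all f;
consequently, if ĝ(0) ≠ 0 and χ₀ ≡ 1/√N, then with A = minₙ N‖T_n g‖₂² and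
B = maxₙ N‖T_n g‖₂², one has N|ĝ(0)|² ≤ A, 0 < A, B ≤ N²μ²‖g‖₂², and
A‖f‖₂² ≤ Σ_{i,k} |⟨f, g_{i,k}⟩|² ≤ B‖f‖₂² for all f. -/
theorem windowed_graph_fourier_frame
    (N : ℕ) (hN : 0 < N) (χ : Fin N → Fin N → ℝ)
    (horth : ∀ l l' : Fin N, ∑ n, χ l n * χ l' n = if l = l' then (1 : ℝ) else 0)
    (g : Fin N → ℝ)
    (μ : ℝ) (hμ : IsGreatest {x : ℝ | ∃ l j : Fin N, x = |χ l j|} μ)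
    (A : ℝ) (hA : IsLeast (Set.range fun n : Fin N =>
      (N : ℝ) * ∑ m, (gtrans χ n g m) ^ 2) A)
    (B : ℝ) (hB : IsGreatest (Set.range fun n : Fin N =>
      (N : ℝ) * ∑ m, (gtrans χ n g m) ^ 2) B) :
    (∀ f : Fin N → ℝ,
      ∑ i, ∑ k, (∑ n, f n * wgfAtom χ g i k n) ^ 2
        = (N : ℝ) * ∑ n, (f n) ^ 2 * ∑ m, (gtrans χ n g m) ^ 2) ∧
    (gft χ g ⟨0, hN⟩ ≠ 0 → (∀ n, χ ⟨0, hN⟩ n = 1 / Real.sqrt N) →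
      ((N : ℝ) * (gft χ g ⟨0, hN⟩) ^ 2 ≤ A ∧ 0 < A ∧
       B ≤ (N : ℝ) ^ 2 * μ ^ 2 * ∑ n, (g n) ^ 2 ∧
       (∀ f : Fin N → ℝ,
         A * ∑ n, (f n) ^ 2 ≤ ∑ i, ∑ k, (∑ n, f n * wgfAtom χ g i k n) ^ 2 ∧
         ∑ i, ∑ k, (∑ n, f n * wgfAtom χ g i k n) ^ 2 ≤ B * ∑ n, (f n) ^ 2))) := by
  have hNpos : (0:ℝ) < (N:ℝ) := by exact_mod_cast hN
  have hsq : Real.sqrt N ^ 2 = (N:ℝ) := Real.sq_sqrt (Nat.cast_nonneg N)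
  -- column orthonormality
  have hcol : ∀ n n' : Fin N, ∑ l, χ l n * χ l n' = if n = n' then (1:ℝ) else 0 := by
    have h1 : (Matrix.of χ) * (Matrix.of χ).transpose = 1 := by
      ext l l'
      simpa [Matrix.mul_apply, Matrix.one_apply] using horth l l'
    have h2 : (Matrix.of χ).transpose * (Matrix.of χ) = 1 := mul_eq_one_comm.mp h1
    intro n n'
    have := congrFun (congrFun h2 n) n'
    simpa [Matrix.mul_apply, Matrix.one_apply, Matrix.transpose_apply] using this
  have parsevalK : ∀ h : Fin N → ℝ, ∑ k, (∑ n, h n * χ k n)^2 = ∑ n, (h n)^2 :=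
    fun h => parseval_aux (fun n k => χ k n) hcol h
  -- symmetry of translation
  have hsym : ∀ i n : Fin N, gtrans χ i g n = gtrans χ n g i := by
    intro i n
    unfold gtrans
    congr 1
    exact Finset.sum_congr rfl fun l _ => by ring
  -- norm of translated window
  have hS : ∀ n : Fin N, ∑ m, (gtrans χ n g m)^2
      = (N:ℝ) * ∑ l, (gft χ g l * χ l n)^2 := by
    intro n
    unfold gtrans
    have : ∀ m, (Real.sqrt N * ∑ l, gft χ g l * χ l n * χ l m)^2
        = (N:ℝ) * (∑ l, (gft χ g l * χ l n) * χ l m)^2 := by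
      intro m
      rw [mul_pow, hsq]
    simp_rw [this]
    rw [← Finset.mul_sum, parseval_aux χ horth]
  -- main identity
  have main : ∀ f : Fin N → ℝ, ∑ i, ∑ k, (∑ n, f n * wgfAtom χ g i k n)^2
      = (N:ℝ) * ∑ n, (f n)^2 * ∑ m, (gtrans χ n g m)^2 := by
    intro f
    have step1 : ∀ i, ∑ k, (∑ n, f n * wgfAtom χ g i k n)^2
        = (N:ℝ) * ∑ n, (f n)^2 * (gtrans χ i g n)^2 := by
      intro i
      have hre : ∀ k, ∑ n, f n * wgfAtom χ g i k n
          = ∑ n, (Real.sqrt N * f n * gtrans χ i g n) * χ k n := by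
        intro k
        refine Finset.sum_congr rfl fun n _ => ?_
        simp only [wgfAtom, gmod]
        ring
      simp_rw [hre, parsevalK]
      rw [Finset.mul_sum]
      refine Finset.sum_congr rfl fun n _ => ?_
      rw [mul_pow, mul_pow, hsq]
      ring
    simp_rw [step1]
    rw [← Finset.mul_sum]
    congr 1
    rw [Finset.sum_comm]
    refine Finset.sum_congr rfl fun n _ => ?_
    rw [Finset.mul_sum]
    exact Finset.sum_congr rfl fun i _ => by rw [hsym i n]
  refine ⟨main, ?_⟩
  intro hg0 hχ0
  have hμ0 : 0 ≤ μ := by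
    obtain ⟨l, j, hx⟩ := hμ.1
    exact hx ▸ abs_nonneg _
  -- N ĝ0² ≤ A
  have hAlb : (N:ℝ) * (gft χ g ⟨0, hN⟩)^2 ≤ A := by
    obtain ⟨n₀, hn₀⟩ := hA.1
    rw [← hn₀]; dsimp only; rw [hS n₀, ← mul_assoc]
    have hterm : (gft χ g ⟨0, hN⟩ * χ ⟨0, hN⟩ n₀)^2
        ≤ ∑ l, (gft χ g l * χ l n₀)^2 :=
      Finset.single_le_sum (f := fun l => (gft χ g l * χ l n₀)^2) (fun l _ => sq_nonneg _) (Finset.mem_univ (⟨0, hN⟩ : Fin N))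
    have h0 : (gft χ g ⟨0, hN⟩ * χ ⟨0, hN⟩ n₀)^2
        = (gft χ g ⟨0, hN⟩)^2 / N := by
      rw [hχ0 n₀, mul_pow, div_pow, one_pow, hsq]
      ring
    calc (N:ℝ) * (gft χ g ⟨0, hN⟩)^2
        = (N:ℝ) * (N:ℝ) * ((gft χ g ⟨0, hN⟩)^2 / N) := by
          field_simp
      _ ≤ (N:ℝ) * (N:ℝ) * ∑ l, (gft χ g l * χ l n₀)^2 := by
          apply mul_le_mul_of_nonneg_left (h0 ▸ hterm)
          positivity
  have hApos : 0 < A := by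
    have : 0 < (N:ℝ) * (gft χ g ⟨0, hN⟩)^2 := by positivity
    linarith
  -- B upper bound
  have hBub : B ≤ (N:ℝ)^2 * μ^2 * ∑ n, (g n)^2 := by
    obtain ⟨n₁, hn₁⟩ := hB.1
    rw [← hn₁]; dsimp only; rw [hS n₁, ← mul_assoc]
    have hpars : ∑ l, (gft χ g l)^2 = ∑ n, (g n)^2 := by
      have := parseval_aux (fun n k => χ k n) hcol g
      simpa [gft] using this
    have hle : ∑ l, (gft χ g l * χ l n₁)^2 ≤ μ^2 * ∑ l, (gft χ g l)^2 := by
      rw [Finset.mul_sum]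
      refine Finset.sum_le_sum fun l _ => ?_
      have h1 : |χ l n₁| ≤ μ := hμ.2 ⟨l, n₁, rfl⟩
      have h2 : (χ l n₁)^2 ≤ μ^2 := by
        rw [← sq_abs]
        exact pow_le_pow_left₀ (abs_nonneg _) h1 2
      calc (gft χ g l * χ l n₁)^2 = (gft χ g l)^2 * (χ l n₁)^2 := by ring
        _ ≤ (gft χ g l)^2 * μ^2 := mul_le_mul_of_nonneg_left h2 (sq_nonneg _)
        _ = μ^2 * (gft χ g l)^2 := by ring
    calc (N:ℝ) * (N:ℝ) * ∑ l, (gft χ g l * χ l n₁)^2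
        ≤ (N:ℝ) * (N:ℝ) * (μ^2 * ∑ l, (gft χ g l)^2) :=
          mul_le_mul_of_nonneg_left hle (by positivity)
      _ = (N:ℝ)^2 * μ^2 * ∑ n, (g n)^2 := by rw [hpars]; ring
  refine ⟨hAlb, hApos, hBub, fun f => ?_⟩
  rw [main f]
  have hrw : (N:ℝ) * ∑ n, (f n)^2 * ∑ m, (gtrans χ n g m)^2
      = ∑ n, (f n)^2 * ((N:ℝ) * ∑ m, (gtrans χ n g m)^2) := by
    rw [Finset.mul_sum]
    exact Finset.sum_congr rfl fun n _ => by ring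
  rw [hrw]
  constructor
  · rw [mul_comm, Finset.sum_mul]
    refine Finset.sum_le_sum fun n _ => ?_
    exact mul_le_mul_of_nonneg_left (hA.2 ⟨n, rfl⟩) (sq_nonneg _)
  · rw [mul_comm, Finset.sum_mul]
    refine Finset.sum_le_sum fun n _ => ?_
    exact mul_le_mul_of_nonneg_left (hB.2 ⟨n, rfl⟩) (sq_nonneg _)
end

section
/- Reconstruction formula for the windowed graph Fourier transform: let g ∈ ℝ^N be a window with ĝ(0) ≠ 0 and assume χ_0(n) = 1/√N for all n (so that ‖T_n g‖_2 > 0 for every n). Then for every f ∈ ℝ^N and every n ∈ {1,...,N}, f(n) = (1 / (N ‖T_n g‖_2^2)) · Σ_{i=1}^{N} Σ_{k=0}^{N−1} Sf(i,k) · g_{i,k}(n), where Sf(i,k) := ⟨f, g_{i,k}⟩. -/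
open Finset

/-- Reconstruction formula for the windowed graph Fourier transform:
if ĝ(0) ≠ 0 and χ₀ ≡ 1/√N, then for every f and every n,
f(n) = (1/(N‖T_n g‖₂²)) · Σ_{i,k} Sf(i,k)·g_{i,k}(n), where Sf(i,k) = ⟨f, g_{i,k}⟩. -/
theorem windowed_graph_fourier_reconstruction
    (N : ℕ) (hN : 0 < N) (χ : Fin N → Fin N → ℝ)
    (horth : ∀ l l' : Fin N, ∑ n, χ l n * χ l' n = if l = l' then (1 : ℝ) else 0)
    (g : Fin N → ℝ)
    (hg0 : gft χ g ⟨0, hN⟩ ≠ 0)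
    (hχ0 : ∀ n, χ ⟨0, hN⟩ n = 1 / Real.sqrt N)
    (f : Fin N → ℝ) (n : Fin N) :
    f n = (1 / ((N : ℝ) * ∑ m, (gtrans χ n g m) ^ 2)) *
      ∑ i, ∑ k, (∑ m, f m * wgfAtom χ g i k m) * wgfAtom χ g i k n := by

  have hNpos : (0:ℝ) < N := by exact_mod_cast hN
  have hsq : Real.sqrt N * Real.sqrt N = (N:ℝ) := Real.mul_self_sqrt (le_of_lt hNpos)
  -- column orthonormality
  have hcol : ∀ m m' : Fin N, ∑ l, χ l m * χ l m' = if m = m' then (1:ℝ) else 0 := by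
    have h1 : (Matrix.of χ) * (Matrix.of χ).transpose = 1 := by
      ext l l'
      simpa [Matrix.mul_apply, Matrix.transpose_apply, Matrix.one_apply] using horth l l'
    have h2 : (Matrix.of χ).transpose * (Matrix.of χ) = 1 := mul_eq_one_comm.mp h1
    intro m m'
    have h3 := congrArg (fun M : Matrix (Fin N) (Fin N) ℝ => M m m') h2
    simpa [Matrix.mul_apply, Matrix.transpose_apply, Matrix.one_apply] using h3
  -- symmetry of translation
  have hsymm : ∀ i m : Fin N, gtrans χ i g m = gtrans χ m g i := by
    intro i m
    simp only [gtrans]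
    congr 1
    exact Finset.sum_congr rfl fun l _ => by ring
  -- key sum over k
  have hk : ∀ i m : Fin N, ∑ k, wgfAtom χ g i k m * wgfAtom χ g i k n
      = (N:ℝ) * gtrans χ i g m * gtrans χ i g n * (if m = n then 1 else 0) := by
    intro i m
    have h1 : ∀ k : Fin N, wgfAtom χ g i k m * wgfAtom χ g i k n
        = (N:ℝ) * gtrans χ i g m * gtrans χ i g n * (χ k m * χ k n) := by
      intro k
      simp only [wgfAtom, gmod]
      have e : Real.sqrt N * gtrans χ i g m * χ k m * (Real.sqrt N * gtrans χ i g n * χ k n)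
          = (Real.sqrt N * Real.sqrt N) * gtrans χ i g m * gtrans χ i g n * (χ k m * χ k n) := by
        ring
      rw [e, hsq]
    rw [Finset.sum_congr rfl fun k _ => h1 k, ← Finset.mul_sum, hcol m n]
  -- main computation
  have hmain : ∑ i, ∑ k, (∑ m, f m * wgfAtom χ g i k m) * wgfAtom χ g i k n
      = (N:ℝ) * f n * ∑ m, (gtrans χ n g m) ^ 2 := by
    have step1 : ∀ i : Fin N, ∑ k, (∑ m, f m * wgfAtom χ g i k m) * wgfAtom χ g i k n
        = (N:ℝ) * f n * (gtrans χ i g n) ^ 2 := by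
      intro i
      have hswap : ∑ k, (∑ m, f m * wgfAtom χ g i k m) * wgfAtom χ g i k n
          = ∑ m, f m * (∑ k, wgfAtom χ g i k m * wgfAtom χ g i k n) := by
        simp_rw [Finset.sum_mul, Finset.mul_sum]
        rw [Finset.sum_comm]
        exact Finset.sum_congr rfl fun m _ => Finset.sum_congr rfl fun k _ => by ring
      rw [hswap]
      have h2 : ∀ m : Fin N, f m * ((N:ℝ) * gtrans χ i g m * gtrans χ i g n * (if m = n then 1 else 0))
          = if m = n then (N:ℝ) * f n * (gtrans χ i g n) ^ 2 else 0 := by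
        intro m
        by_cases h : m = n
        · subst h; simp; ring
        · simp [h]
      rw [Finset.sum_congr rfl fun m _ => by rw [hk i m, h2 m]]
      simp
    rw [Finset.sum_congr rfl fun i _ => step1 i, ← Finset.mul_sum]
    congr 1
    exact Finset.sum_congr rfl fun i _ => by rw [hsymm i n]
  -- expansion of the norm
  have hD : ∑ m, (gtrans χ n g m) ^ 2 = (N:ℝ) * ∑ l, (gft χ g l * χ l n) ^ 2 := by
    have h1 : ∀ m : Fin N, (gtrans χ n g m) ^ 2
        = (N:ℝ) * ∑ l, ∑ l', (gft χ g l * χ l n) * (gft χ g l' * χ l' n) * (χ l m * χ l' m) := by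
      intro m
      simp only [gtrans]
      rw [mul_pow, Real.sq_sqrt hNpos.le, sq (∑ l, gft χ g l * χ l n * χ l m),
        Finset.sum_mul_sum]
      congr 1
      exact Finset.sum_congr rfl fun l _ => Finset.sum_congr rfl fun l' _ => by ring
    rw [Finset.sum_congr rfl fun m _ => h1 m, ← Finset.mul_sum]
    congr 1
    rw [Finset.sum_comm]
    have h2 : ∀ l : Fin N, ∑ m, ∑ l', (gft χ g l * χ l n) * (gft χ g l' * χ l' n) * (χ l m * χ l' m)
        = (gft χ g l * χ l n) ^ 2 := by
      intro l
      rw [Finset.sum_comm]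
      have h3 : ∀ l' : Fin N, ∑ m, (gft χ g l * χ l n) * (gft χ g l' * χ l' n) * (χ l m * χ l' m)
          = (gft χ g l * χ l n) * (gft χ g l' * χ l' n) * (if l = l' then 1 else 0) := by
        intro l'
        rw [← Finset.mul_sum]
        congr 1
        rw [← horth l l']
      rw [Finset.sum_congr rfl fun l' _ => h3 l']
      have h4 : ∀ l' : Fin N, (gft χ g l * χ l n) * (gft χ g l' * χ l' n) * (if l = l' then 1 else 0)
          = if l' = l then (gft χ g l * χ l n) ^ 2 else 0 := by
        intro l'
        by_cases h : l' = l
        · subst h; simp; ring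
        · simp [h, Ne.symm h]
      rw [Finset.sum_congr rfl fun l' _ => h4 l']
      simp
    exact Finset.sum_congr rfl fun l _ => h2 l
  -- positivity of the norm
  have hc0 : gft χ g ⟨0, hN⟩ * χ ⟨0, hN⟩ n ≠ 0 := by
    apply mul_ne_zero hg0
    rw [hχ0 n]
    positivity
  have hsumpos : (0:ℝ) < ∑ l, (gft χ g l * χ l n) ^ 2 := by
    have hle : (gft χ g ⟨0, hN⟩ * χ ⟨0, hN⟩ n) ^ 2 ≤ ∑ l, (gft χ g l * χ l n) ^ 2 :=
      Finset.single_le_sum (f := fun l => (gft χ g l * χ l n) ^ 2) (fun l _ => sq_nonneg _) (Finset.mem_univ (⟨0, hN⟩ : Fin N))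
    have hpos : (0:ℝ) < (gft χ g ⟨0, hN⟩ * χ ⟨0, hN⟩ n) ^ 2 :=
      lt_of_le_of_ne (sq_nonneg _) (Ne.symm (pow_ne_zero 2 hc0))
    linarith
  have hDpos : (0:ℝ) < ∑ m, (gtrans χ n g m) ^ 2 := by
    rw [hD]; positivity
  have hND : (N:ℝ) * ∑ m, (gtrans χ n g m) ^ 2 ≠ 0 := by positivity
  rw [hmain]
  field_simp
end
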